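/- arXiv:math/0311505 — 4 statements merged into one kernel-verified Lean document; each statement's English description precedes it below -/
import Mathlib

section
/- For every integer n ≥ 2, B(n) - β(n) ≤ 2·√n. -/
open Finset

def beta (n : ℕ) : ℕ := ∑ p ∈ n.primeFactors, p
def Bfun (n : ℕ) : ℕ := ∑ p ∈ n.primeFactors, n.factorization p * p
def B1fun (n : ℕ) : ℕ := ∑ p ∈ n.primeFactors, p ^ n.factorization p
def Pfun (n : ℕ) : ℕ := max 1 (n.primeFactors.sup id)
def Omegafun (n : ℕ) : ℕ := ∑ p ∈ n.primeFactors, n.factorization p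
def omegafun (n : ℕ) : ℕ := n.primeFactors.card
def Squarefull (s : ℕ) : Prop := 0 < s ∧ ∀ p : ℕ, p.Prime → p ∣ s → p ^ 2 ∣ s

lemma auxA : ∀ a : ℕ, (a + 1)^2 ≤ 2^(a + 2)
  | 0 => by norm_num
  | 1 => by norm_num
  | 2 => by norm_num
  | (k+3) => by
      have ih := auxA (k+2)
      calc (k+3+1)^2 ≤ 2*(k+2+1)^2 := by
              zify; nlinarith [sq_nonneg (k:ℤ), Int.ofNat_nonneg k]
        _ ≤ 2*2^(k+2+2) := by omega
        _ = 2^(k+3+2) := by ring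

lemma auxB (f : ℕ → ℝ) : ∀ s : Finset ℕ, (∀ i ∈ s, (2:ℝ) ≤ f i) →
    (∑ i ∈ s, f i ≤ ∏ i ∈ s, f i) ∧ (s.Nonempty → 2 ≤ ∏ i ∈ s, f i) := by
  intro s
  induction s using Finset.cons_induction with
  | empty => simp
  | cons a s ha ih =>
    intro h
    have h2 : ∀ i ∈ s, (2:ℝ) ≤ f i := fun i hi => h i (Finset.mem_cons_of_mem hi)
    have hfa : (2:ℝ) ≤ f a := h a (Finset.mem_cons_self a s)
    obtain ⟨ih1, ih2⟩ := ih h2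
    rw [Finset.sum_cons, Finset.prod_cons]
    rcases s.eq_empty_or_nonempty with rfl | hne
    · simp only [Finset.sum_empty, Finset.prod_empty, add_zero, mul_one]
      exact ⟨le_refl _, fun _ => hfa⟩
    · have hP := ih2 hne
      constructor
      · nlinarith
      · intro _; nlinarith

lemma auxC (f : ℕ → ℝ) : ∀ s : Finset ℕ, (∀ i ∈ s, 0 ≤ f i) →
    Real.sqrt (∏ i ∈ s, f i) = ∏ i ∈ s, Real.sqrt (f i) := by
  intro s
  induction s using Finset.cons_induction with
  | empty => simp
  | cons a s ha ih =>
    intro h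
    rw [Finset.prod_cons, Finset.prod_cons,
      Real.sqrt_mul (h a (Finset.mem_cons_self a s)),
      ih (fun i hi => h i (Finset.mem_cons_of_mem hi))]

lemma auxD (f : ℕ → ℝ) : ∀ s : Finset ℕ, (∀ i ∈ s, (1:ℝ) ≤ f i) →
    1 ≤ ∏ i ∈ s, f i := by
  intro s
  induction s using Finset.cons_induction with
  | empty => simp
  | cons a s ha ih =>
    intro h
    rw [Finset.prod_cons]
    have h1 := h a (Finset.mem_cons_self a s)
    have h2 := ih (fun i hi => h i (Finset.mem_cons_of_mem hi))
    nlinarith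

theorem stmt1 (n : ℕ) (hn : 2 ≤ n) :
    ((Bfun n - beta n : ℕ) : ℝ) ≤ 2 * Real.sqrt n := by
  have hn0 : n ≠ 0 := by omega
  set F := n.primeFactors with hF
  set α := n.factorization with hα'
  have hα : ∀ p ∈ F, 1 ≤ α p := fun p hp =>
    (Nat.Prime.factorization_pos_of_dvd (Nat.prime_of_mem_primeFactors hp) hn0
      (Nat.dvd_of_mem_primeFactors hp))
  have hp2 : ∀ p ∈ F, 2 ≤ p := fun p hp => (Nat.prime_of_mem_primeFactors hp).two_le
  have hle : beta n ≤ Bfun n :=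
    Finset.sum_le_sum (fun p hp => Nat.le_mul_of_pos_left p (hα p hp))
  have hcast : ((Bfun n - beta n : ℕ) : ℝ) = ∑ p ∈ F, (((α p : ℝ) - 1) * p) := by
    rw [Nat.cast_sub hle]
    unfold Bfun beta
    push_cast
    rw [← Finset.sum_sub_distrib]
    exact Finset.sum_congr rfl (fun p hp => by ring)
  rw [hcast]
  set g : ℕ → ℝ := fun p => Real.sqrt ((p:ℝ) ^ α p) with hg
  set s := F.filter (fun p => 2 ≤ α p) with hs
  have hsub : s ⊆ F := Finset.filter_subset _ _
  have hfilter : ∑ p ∈ s, (((α p : ℝ) - 1) * p) = ∑ p ∈ F, (((α p : ℝ) - 1) * p) := by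
    apply Finset.sum_filter_of_ne
    intro p hp hne
    by_contra hlt
    have h1 : α p = 1 := by have := hα p hp; omega
    rw [h1] at hne; simp at hne
  rw [← hfilter]
  -- per-term bound on s
  have hterm : ∀ p ∈ s, ((α p : ℝ) - 1) * p ≤ 2 * g p := by
    intro p hp
    have hpF := hsub hp
    have h2p : 2 ≤ p := hp2 p hpF
    have h2a : 2 ≤ α p := (Finset.mem_filter.1 hp).2
    -- Nat inequality: (α-1)^2 * p^2 ≤ 4 * p^α
    have hA : (α p - 1)^2 ≤ 2 ^ α p := by
      have := auxA (α p - 2)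
      have e : α p - 2 + 1 = α p - 1 := by omega
      have e2 : α p - 2 + 2 = α p := by omega
      rwa [e, e2] at this
    have hB : (2:ℕ) ^ α p ≤ 4 * p ^ (α p - 2) := by
      calc (2:ℕ) ^ α p = 2^2 * 2^(α p - 2) := by
            rw [← pow_add]; congr 1; omega
        _ ≤ 4 * p ^ (α p - 2) := by
            have := Nat.pow_le_pow_left h2p (α p - 2); omega
    have hnat : ((α p - 1) * p)^2 ≤ 4 * p ^ α p := by
      have e3 : p ^ (α p - 2) * p ^ 2 = p ^ α p := by
        rw [← pow_add]; congr 1; omega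
      calc ((α p - 1) * p)^2 = (α p - 1)^2 * p^2 := by ring
        _ ≤ (4 * p ^ (α p - 2)) * p^2 := Nat.mul_le_mul_right _ (hA.trans hB)
        _ = 4 * p ^ α p := by rw [mul_assoc, e3]
    have hcast2 : ((α p : ℝ) - 1) * p = (((α p - 1) * p : ℕ) : ℝ) := by
      push_cast [Nat.cast_sub (hα p hpF)]; ring
    rw [hcast2, hg]
    have h4 : (((α p - 1) * p : ℕ) : ℝ)^2 ≤ 4 * (p:ℝ) ^ α p := by
      have h := (Nat.cast_le (α := ℝ)).2 hnat
      push_cast at h ⊢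
      linarith
    calc (((α p - 1) * p : ℕ) : ℝ)
        = Real.sqrt ((((α p - 1) * p : ℕ) : ℝ)^2) := (Real.sqrt_sq (by positivity)).symm
      _ ≤ Real.sqrt (4 * (p:ℝ) ^ α p) := Real.sqrt_le_sqrt h4
      _ = 2 * Real.sqrt ((p:ℝ) ^ α p) := by
          rw [show (4:ℝ) = 2^2 by norm_num, Real.sqrt_mul (by positivity), Real.sqrt_sq (by norm_num)]
  have hg2 : ∀ p ∈ s, (2:ℝ) ≤ g p := by
    intro p hp
    have hpF := hsub hp
    have h2p : 2 ≤ p := hp2 p hpF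
    have h2a : 2 ≤ α p := (Finset.mem_filter.1 hp).2
    have hp1 : (1:ℝ) ≤ (p:ℝ) := by
      have : 1 ≤ p := by omega
      exact_mod_cast this
    have : ((p:ℝ))^2 ≤ (p:ℝ) ^ α p := pow_le_pow_right₀ hp1 h2a
    calc (2:ℝ) = Real.sqrt (2^2) := by
          rw [Real.sqrt_sq (by norm_num)]
      _ ≤ Real.sqrt ((p:ℝ)^2) := Real.sqrt_le_sqrt (by nlinarith [show (2:ℝ) ≤ p by exact_mod_cast h2p])
      _ ≤ Real.sqrt ((p:ℝ) ^ α p) := Real.sqrt_le_sqrt this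
  have hsumprod := (auxB g s hg2).1
  -- product over s extends to F
  have hgnn : ∀ p ∈ F, (1:ℝ) ≤ g p := by
    intro p hp
    rw [hg]
    have hp1 : (1:ℝ) ≤ (p:ℝ) := by
      have : 1 ≤ p := by have := hp2 p hp; omega
      exact_mod_cast this
    have : (1:ℝ) ≤ (p:ℝ) ^ α p := one_le_pow₀ hp1
    calc (1:ℝ) = Real.sqrt 1 := Real.sqrt_one.symm
      _ ≤ Real.sqrt ((p:ℝ) ^ α p) := Real.sqrt_le_sqrt this
  have hprodext : ∏ p ∈ s, g p ≤ ∏ p ∈ F, g p := by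
    rw [← Finset.prod_filter_mul_prod_filter_not F (fun p => 2 ≤ α p)]
    have h1 : (1:ℝ) ≤ ∏ p ∈ F.filter (fun p => ¬ 2 ≤ α p), g p :=
      auxD g _ (fun p hp => hgnn p (Finset.filter_subset _ _ hp))
    have h0 : (0:ℝ) ≤ ∏ p ∈ s, g p := le_trans zero_le_one (auxD g s (fun p hp => hgnn p (hsub hp)))
    nlinarith
  have hsqrt : ∏ p ∈ F, g p = Real.sqrt n := by
    have hprodn : ∏ p ∈ F, p ^ α p = n := by
      rw [hF, hα', ← Nat.support_factorization]
      exact Nat.factorization_prod_pow_eq_self hn0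
    have : ((n:ℝ)) = ∏ p ∈ F, ((p:ℝ) ^ α p) := by
      rw [← hprodn]; push_cast; rfl
    rw [this, auxC _ F (fun p hp => by positivity)]
  calc ∑ p ∈ s, (((α p : ℝ) - 1) * p) ≤ ∑ p ∈ s, 2 * g p := Finset.sum_le_sum hterm
    _ = 2 * ∑ p ∈ s, g p := by rw [Finset.mul_sum]
    _ ≤ 2 * ∏ p ∈ s, g p := by linarith
    _ ≤ 2 * ∏ p ∈ F, g p := by linarith
    _ = 2 * Real.sqrt n := by rw [hsqrt]
end

section
/- For all x ≥ 1, |∑_{n ≤ x} B₁(n) - ∑_{n ≤ x} β(n)| ≤ C·x^{3/2} for some absolute constant C. -/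
open Finset

open scoped Classical in
noncomputable def Sset (N : ℕ) : Finset ℕ :=
  (Finset.Icc 2 N).filter (fun q => ∃ p k : ℕ, p.Prime ∧ 2 ≤ k ∧ q = p ^ k)

open scoped Classical in
lemma mem_Sset {N q : ℕ} : q ∈ Sset N ↔ (2 ≤ q ∧ q ≤ N) ∧ ∃ p k : ℕ, p.Prime ∧ 2 ≤ k ∧ q = p ^ k := by
  rw [Sset, Finset.mem_filter, Finset.mem_Icc]

lemma beta_le_B1fun (n : ℕ) : beta n ≤ B1fun n := by
  apply Finset.sum_le_sum
  intro p hp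
  have h1 : 1 ≤ n.factorization p := by
    rw [Nat.mem_primeFactors] at hp
    exact (Nat.Prime.factorization_pos_of_dvd hp.1 hp.2.2 hp.2.1)
  calc p = p ^ 1 := (pow_one p).symm
  _ ≤ p ^ n.factorization p := Nat.pow_le_pow_right
      (Nat.mem_primeFactors.mp hp).1.pos h1

lemma per_n (N n : ℕ) (hn : n ∈ Finset.Icc 1 N) :
    B1fun n ≤ beta n + ∑ q ∈ Sset N, if q ∣ n then q else 0 := by
  have hn1 : 1 ≤ n := (Finset.mem_Icc.mp hn).1
  have hnN : n ≤ N := (Finset.mem_Icc.mp hn).2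
  have hsplit : B1fun n = beta n + ∑ p ∈ n.primeFactors, (p ^ n.factorization p - p) := by
    rw [beta, B1fun, ← Finset.sum_add_distrib]
    apply Finset.sum_congr rfl
    intro p hp
    have h1 : 1 ≤ n.factorization p :=
      Nat.Prime.factorization_pos_of_dvd (Nat.mem_primeFactors.mp hp).1
        (Nat.mem_primeFactors.mp hp).2.2 (Nat.mem_primeFactors.mp hp).2.1
    have hle : p ≤ p ^ n.factorization p := by
      calc p = p ^ 1 := (pow_one p).symm
      _ ≤ _ := Nat.pow_le_pow_right (Nat.mem_primeFactors.mp hp).1.pos h1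
    omega
  rw [hsplit]
  gcongr
  -- reduce to sum over primes with exponent ≥ 2
  have hT : ∑ p ∈ n.primeFactors, (p ^ n.factorization p - p)
      = ∑ p ∈ n.primeFactors.filter (fun p => 2 ≤ n.factorization p),
          (p ^ n.factorization p - p) := by
    refine (Finset.sum_filter_of_ne ?_).symm
    intro p hp hne
    by_contra h
    have h1 : 1 ≤ n.factorization p :=
      Nat.Prime.factorization_pos_of_dvd (Nat.mem_primeFactors.mp hp).1
        (Nat.mem_primeFactors.mp hp).2.2 (Nat.mem_primeFactors.mp hp).2.1
    have : n.factorization p = 1 := by omega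
    rw [this, pow_one] at hne
    omega
  rw [hT]
  have step1 : ∑ p ∈ n.primeFactors.filter (fun p => 2 ≤ n.factorization p),
      (p ^ n.factorization p - p)
      ≤ ∑ p ∈ n.primeFactors.filter (fun p => 2 ≤ n.factorization p),
          p ^ n.factorization p :=
    Finset.sum_le_sum fun p _ => Nat.sub_le _ _
  refine step1.trans ?_
  -- image under p ↦ p ^ ν_p(n)
  have himg : ∑ p ∈ n.primeFactors.filter (fun p => 2 ≤ n.factorization p),
      p ^ n.factorization p
      = ∑ q ∈ (n.primeFactors.filter (fun p => 2 ≤ n.factorization p)).image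
          (fun p => p ^ n.factorization p), q := by
    rw [Finset.sum_image]
    intro p hp p' hp' heq
    have hpp : p.Prime := (Nat.mem_primeFactors.mp (Finset.mem_filter.mp hp).1).1
    have hpp' : p'.Prime := (Nat.mem_primeFactors.mp (Finset.mem_filter.mp hp').1).1
    have h1 : 1 ≤ n.factorization p := le_trans (by norm_num) (Finset.mem_filter.mp hp).2
    have hdvd : p ∣ p' ^ n.factorization p' := by
      beta_reduce at heq
      rw [← heq]
      exact dvd_pow_self p (by omega)
    exact (Nat.prime_dvd_prime_iff_eq hpp hpp').mp (hpp.dvd_of_dvd_pow hdvd)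
  rw [himg, ← Finset.sum_filter]
  apply Finset.sum_le_sum_of_subset
  intro q hq
  simp only [Finset.mem_image] at hq
  obtain ⟨p, hp, rfl⟩ := hq
  have hpmem := (Finset.mem_filter.mp hp).1
  have h2 : 2 ≤ n.factorization p := (Finset.mem_filter.mp hp).2
  have hpp : p.Prime := (Nat.mem_primeFactors.mp hpmem).1
  have hdvdn : p ^ n.factorization p ∣ n := Nat.ordProj_dvd n p
  have hqle : p ^ n.factorization p ≤ n := Nat.le_of_dvd (by omega) hdvdn
  have h2q : 2 ≤ p ^ n.factorization p := by
    calc (2:ℕ) = 2 ^ 1 := rfl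
    _ ≤ p ^ 1 := Nat.pow_le_pow_left hpp.two_le 1
    _ ≤ p ^ n.factorization p := Nat.pow_le_pow_right hpp.pos (by omega)
  classical
  refine Finset.mem_filter.mpr ⟨mem_Sset.mpr ⟨⟨h2q, by omega⟩,
    p, n.factorization p, hpp, h2, rfl⟩, hdvdn⟩

lemma Sset_card (N : ℕ) : (Sset N).card ≤ 2 * Nat.sqrt N := by
  classical
  have : (Sset N).card ≤ ((Finset.Icc 2 (Nat.sqrt N)) ×ˢ (Finset.range 2)).card := by
    apply Finset.card_le_card_of_injOn
      (fun q => (q.minFac ^ (q.factorization q.minFac / 2), q.factorization q.minFac % 2))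
    · intro q hq
      obtain ⟨⟨hq2le, hqN⟩, p, k, hpp, hk, rfl⟩ := mem_Sset.mp hq
      simp only [Finset.mem_coe]
      rw [Nat.Prime.pow_minFac hpp (by omega), Nat.Prime.factorization_pow hpp,
        Finsupp.single_eq_same]
      refine Finset.mem_mk.mpr (Finset.mk_mem_product (Finset.mem_Icc.mpr ⟨?_, ?_⟩)
        (Finset.mem_range.mpr (by omega)))
      · calc (2:ℕ) ≤ p := hpp.two_le
        _ = p ^ 1 := (pow_one p).symm
        _ ≤ p ^ (k / 2) := Nat.pow_le_pow_right hpp.pos (by omega)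
      · rw [Nat.le_sqrt']
        calc (p ^ (k / 2)) ^ 2 = p ^ (k / 2 * 2) := by rw [← pow_mul]
        _ ≤ p ^ k := Nat.pow_le_pow_right hpp.pos (by omega)
        _ ≤ N := hqN
    · intro q1 hq1 q2 hq2 heq
      simp only [Finset.mem_coe] at hq1 hq2
      obtain ⟨hq1m, p1, k1, hpp1, hk1, rfl⟩ := mem_Sset.mp hq1
      obtain ⟨hq2m, p2, k2, hpp2, hk2, rfl⟩ := mem_Sset.mp hq2
      simp only [Nat.Prime.pow_minFac hpp1 (show k1 ≠ 0 by omega),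
        Nat.Prime.factorization_pow hpp1, Finsupp.single_eq_same,
        Nat.Prime.pow_minFac hpp2 (show k2 ≠ 0 by omega),
        Nat.Prime.factorization_pow hpp2, Prod.mk.injEq] at heq
      obtain ⟨hm, hr⟩ := heq
      have hp12 : p1 = p2 := by
        have hdvd : p1 ∣ p2 ^ (k2 / 2) := by
          rw [← hm]; exact dvd_pow_self p1 (by omega)
        exact (Nat.prime_dvd_prime_iff_eq hpp1 hpp2).mp (hpp1.dvd_of_dvd_pow hdvd)
      subst hp12
      have hk12 : k1 / 2 = k2 / 2 := Nat.pow_right_injective hpp1.two_le hm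
      have : k1 = k2 := by omega
      rw [this]
  refine this.trans ?_
  rw [Finset.card_product, Nat.card_Icc, Finset.card_range]
  omega

lemma key_nat (N : ℕ) :
    ∑ n ∈ Finset.Icc 1 N, B1fun n ≤ (∑ n ∈ Finset.Icc 1 N, beta n) + 2 * N * Nat.sqrt N := by
  classical
  have hinner : ∀ q ∈ Sset N, (∑ n ∈ Finset.Icc 1 N, if q ∣ n then q else 0) ≤ N := by
    intro q hq
    rw [← Finset.sum_filter, Finset.sum_const, smul_eq_mul]
    have hIcc : Finset.Icc 1 N = Finset.Ioc 0 N := rfl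
    rw [hIcc, Nat.Ioc_filter_dvd_card_eq_div]
    exact Nat.div_mul_le_self N q
  have houter : (∑ q ∈ Sset N, ∑ n ∈ Finset.Icc 1 N, if q ∣ n then q else 0)
      ≤ 2 * N * Nat.sqrt N := by
    calc (∑ q ∈ Sset N, ∑ n ∈ Finset.Icc 1 N, if q ∣ n then q else 0)
        ≤ ∑ _q ∈ Sset N, N := Finset.sum_le_sum hinner
    _ = (Sset N).card * N := by rw [Finset.sum_const, smul_eq_mul]
    _ ≤ 2 * Nat.sqrt N * N := Nat.mul_le_mul_right N (Sset_card N)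
    _ = 2 * N * Nat.sqrt N := by ring
  calc ∑ n ∈ Finset.Icc 1 N, B1fun n
      ≤ ∑ n ∈ Finset.Icc 1 N, (beta n + ∑ q ∈ Sset N, if q ∣ n then q else 0) :=
        Finset.sum_le_sum (fun n hn => per_n N n hn)
  _ = (∑ n ∈ Finset.Icc 1 N, beta n)
      + ∑ q ∈ Sset N, ∑ n ∈ Finset.Icc 1 N, (if q ∣ n then q else 0) := by
        rw [Finset.sum_add_distrib, Finset.sum_comm]
  _ ≤ (∑ n ∈ Finset.Icc 1 N, beta n) + 2 * N * Nat.sqrt N := by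
        exact Nat.add_le_add_left houter _

theorem stmt6 : ∃ C : ℝ, ∀ x : ℝ, 1 ≤ x →
    |(∑ n ∈ Finset.Icc 1 ⌊x⌋₊, (B1fun n : ℝ)) - ∑ n ∈ Finset.Icc 1 ⌊x⌋₊, (beta n : ℝ)|
      ≤ C * x ^ ((3 : ℝ) / 2) := by
  refine ⟨2, fun x hx => ?_⟩
  set N := ⌊x⌋₊ with hN
  have hx0 : (0:ℝ) < x := lt_of_lt_of_le one_pos hx
  have hble : ∑ n ∈ Finset.Icc 1 N, beta n ≤ ∑ n ∈ Finset.Icc 1 N, B1fun n :=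
    Finset.sum_le_sum fun n _ => beta_le_B1fun n
  have hdiff : (∑ n ∈ Finset.Icc 1 N, (B1fun n : ℝ)) - ∑ n ∈ Finset.Icc 1 N, (beta n : ℝ)
      = ((∑ n ∈ Finset.Icc 1 N, B1fun n - ∑ n ∈ Finset.Icc 1 N, beta n : ℕ) : ℝ) := by
    rw [Nat.cast_sub hble, Nat.cast_sum, Nat.cast_sum]
  rw [hdiff, abs_of_nonneg (Nat.cast_nonneg _)]
  have hkey : (∑ n ∈ Finset.Icc 1 N, B1fun n) - (∑ n ∈ Finset.Icc 1 N, beta n)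
      ≤ 2 * N * Nat.sqrt N := by
    have := key_nat N
    omega
  have hNx : (N : ℝ) ≤ x := Nat.floor_le (le_of_lt hx0)
  have hsq : (Nat.sqrt N : ℝ) ≤ Real.sqrt x := by
    rw [show (Nat.sqrt N : ℝ) = Real.sqrt ((Nat.sqrt N : ℝ)^2) by
      rw [Real.sqrt_sq (Nat.cast_nonneg _)]]
    apply Real.sqrt_le_sqrt
    calc ((Nat.sqrt N : ℝ))^2 = ((Nat.sqrt N * Nat.sqrt N : ℕ) : ℝ) := by push_cast; ring
    _ ≤ (N : ℝ) := Nat.cast_le.mpr (Nat.sqrt_le N)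
    _ ≤ x := hNx
  calc ((∑ n ∈ Finset.Icc 1 N, B1fun n - ∑ n ∈ Finset.Icc 1 N, beta n : ℕ) : ℝ)
      ≤ ((2 * N * Nat.sqrt N : ℕ) : ℝ) := Nat.cast_le.mpr hkey
  _ = 2 * (N : ℝ) * (Nat.sqrt N : ℝ) := by push_cast; ring
  _ ≤ 2 * x * Real.sqrt x := by
      apply mul_le_mul
      · gcongr
      · exact hsq
      · exact Nat.cast_nonneg _
      · positivity
  _ = 2 * x ^ ((3:ℝ)/2) := by
      rw [Real.sqrt_eq_rpow]
      rw [show ((3:ℝ)/2) = 1 + 1/2 by norm_num, Real.rpow_add hx0, Real.rpow_one]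
      ring
end

section
/- For every k ≥ 1, the sum ∑ 1/s over squarefull integers s with B(s) - β(s) ≥ k is O(1/k); i.e., there is an absolute constant C with ∑_{s squarefull, B(s)-β(s) ≥ k} 1/s ≤ C/k. -/
open Finset

lemma aux_pow : ∀ m : ℕ, 4*(m+1)^2 ≤ 9*2^m := by
  intro m
  induction m with
  | zero => norm_num
  | succ n ih =>
    rcases Nat.lt_or_ge n 2 with h | h
    · interval_cases n <;> norm_num
    · have h4 : 4*(n+1+1)^2 ≤ 8*(n+1)^2 := by nlinarith
      calc 4*(n+1+1)^2 ≤ 8*(n+1)^2 := h4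
        _ ≤ 2*(9*2^n) := by linarith [ih]
        _ = 9*2^(n+1) := by rw [pow_succ]; ring

lemma prime_pow_bound {p e : ℕ} (hp : 2 ≤ p) (he : 2 ≤ e) :
    4 * ((e-1)*p)^2 ≤ 9 * p^e := by
  obtain ⟨m, rfl⟩ : ∃ m, e = m + 2 := ⟨e - 2, by omega⟩
  have h1 : 4 * (m+1)^2 ≤ 9 * 2^m := aux_pow m
  have h2 : (2:ℕ)^m ≤ p^m := Nat.pow_le_pow_left hp m
  have h3 : m + 2 - 1 = m + 1 := by omega
  rw [h3]
  calc 4 * ((m+1)*p)^2 = (4*(m+1)^2) * p^2 := by ring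
    _ ≤ (9 * 2^m) * p^2 := Nat.mul_le_mul_right _ h1
    _ ≤ (9 * p^m) * p^2 := Nat.mul_le_mul_right _ (Nat.mul_le_mul_left 9 h2)
    _ = 9 * p^(m+2) := by ring

lemma sum_le_prod' (F : Finset ℕ) (f : ℕ → ℝ) :
    (∀ x ∈ F, 2 ≤ f x) → 3 * ∑ x ∈ F, f x ≤ 4 * ∏ x ∈ F, f x := by
  classical
  induction F using Finset.induction_on with
  | empty => intro _; simp
  | insert a F ha ih =>
    intro hf
    rw [Finset.sum_insert ha, Finset.prod_insert ha]
    have hfa := hf a (Finset.mem_insert_self a F)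
    have hF : ∀ x ∈ F, 2 ≤ f x := fun x hx => hf x (Finset.mem_insert_of_mem hx)
    have ih' := ih hF
    rcases F.eq_empty_or_nonempty with rfl | hne
    · simp; nlinarith
    · have hP : 2 ≤ ∏ x ∈ F, f x := by
        calc (2:ℝ) ≤ 2 ^ F.card := by
              have : 1 ≤ F.card := Finset.card_pos.2 hne
              calc (2:ℝ) = 2^1 := (pow_one 2).symm
                _ ≤ 2 ^ F.card := by
                    exact pow_le_pow_right₀ (by norm_num) this
          _ = ∏ _x ∈ F, 2 := by rw [Finset.prod_const]
          _ ≤ ∏ x ∈ F, f x :=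
              Finset.prod_le_prod (fun i _ => by norm_num) (fun i hi => hF i hi)
      nlinarith [ih', hP, hfa,
        mul_nonneg (by linarith : (0:ℝ) ≤ f a - 2)
          (by linarith : (0:ℝ) ≤ 4*∏ x ∈ F, f x - 3)]

lemma keyA {s k : ℕ} (hs : Squarefull s) (hk : k ≤ Bfun s - beta s) :
    k^2 ≤ 4 * s := by
  have hs0 : s ≠ 0 := hs.1.ne'
  -- exponents are ≥ 2
  have he : ∀ p ∈ s.primeFactors, 2 ≤ s.factorization p := by
    intro p hp
    have hpp := Nat.prime_of_mem_primeFactors hp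
    have hdvd := Nat.dvd_of_mem_primeFactors hp
    exact (Nat.Prime.pow_dvd_iff_le_factorization hpp hs0).1 (hs.2 p hpp hdvd)
  -- D = sum of (e-1)*p
  have hD : Bfun s - beta s = ∑ p ∈ s.primeFactors, (s.factorization p - 1) * p := by
    have : ∑ p ∈ s.primeFactors, (s.factorization p - 1) * p + beta s = Bfun s := by
      rw [beta, Bfun, ← Finset.sum_add_distrib]
      refine Finset.sum_congr rfl (fun p hp => ?_)
      have := he p hp
      have hp2 := (Nat.prime_of_mem_primeFactors hp).two_le
      cases' Nat.exists_eq_add_of_le this with m hm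
      rw [hm, show 2+m-1 = m+1 from by omega]; ring
    omega
  -- real quantities
  set t : ℕ → ℝ := fun p => Real.sqrt ((p:ℝ) ^ s.factorization p) with ht
  have htnn : ∀ p, 0 ≤ t p := fun p => Real.sqrt_nonneg _
  have ht2 : ∀ p ∈ s.primeFactors, 2 ≤ t p := by
    intro p hp
    have hp2 := (Nat.prime_of_mem_primeFactors hp).two_le
    rw [ht]
    rw [show (2:ℝ) = Real.sqrt 4 by
      rw [show (4:ℝ) = 2^2 by norm_num, Real.sqrt_sq]; norm_num]
    apply Real.sqrt_le_sqrt
    calc (4:ℝ) = (2:ℝ)^2 := by norm_num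
      _ ≤ (p:ℝ)^2 := by
          apply pow_le_pow_left₀ (by norm_num)
          exact_mod_cast hp2
      _ ≤ (p:ℝ)^(s.factorization p) := by
          apply pow_le_pow_right₀
          · have : (1:ℝ) ≤ 2 := one_le_two
            have h2 : (2:ℝ) ≤ (p:ℝ) := by exact_mod_cast hp2
            linarith
          · exact he p hp
  -- termwise: 2*(e-1)*p ≤ 3*t p
  have hterm : ∀ p ∈ s.primeFactors,
      2 * (((s.factorization p - 1) * p : ℕ) : ℝ) ≤ 3 * t p := by
    intro p hp
    have hp2 := (Nat.prime_of_mem_primeFactors hp).two_le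
    have hnat := prime_pow_bound hp2 (he p hp)
    have hcast : (2 * (((s.factorization p - 1) * p : ℕ) : ℝ))^2 ≤ 9 * (p:ℝ)^(s.factorization p) := by
      have : ((4 * ((s.factorization p - 1)*p)^2 : ℕ) : ℝ) ≤ ((9 * p^(s.factorization p) : ℕ) : ℝ) := by
        exact_mod_cast hnat
      push_cast at this ⊢
      nlinarith [this]
    have h9 : Real.sqrt (9 * (p:ℝ)^(s.factorization p)) = 3 * t p := by
      rw [ht, show (9:ℝ) = 3^2 by norm_num, Real.sqrt_mul (by positivity), Real.sqrt_sq (by norm_num)]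
    calc 2 * (((s.factorization p - 1) * p : ℕ) : ℝ)
        = Real.sqrt ((2 * (((s.factorization p - 1) * p : ℕ) : ℝ))^2) := by
          rw [Real.sqrt_sq (by positivity)]
      _ ≤ Real.sqrt (9 * (p:ℝ)^(s.factorization p)) := Real.sqrt_le_sqrt hcast
      _ = 3 * t p := h9
  -- sum bound
  have hsum : 2 * ((Bfun s - beta s : ℕ) : ℝ) ≤ 4 * ∏ p ∈ s.primeFactors, t p := by
    calc 2 * ((Bfun s - beta s : ℕ) : ℝ)
        = ∑ p ∈ s.primeFactors, 2 * (((s.factorization p - 1) * p : ℕ) : ℝ) := by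
          rw [hD]; push_cast; rw [Finset.mul_sum]
      _ ≤ ∑ p ∈ s.primeFactors, 3 * t p := Finset.sum_le_sum hterm
      _ = 3 * ∑ p ∈ s.primeFactors, t p := by rw [Finset.mul_sum]
      _ ≤ 4 * ∏ p ∈ s.primeFactors, t p := sum_le_prod' _ _ ht2
  -- product squared is s
  have hprodsq : (∏ p ∈ s.primeFactors, t p)^2 = (s:ℝ) := by
    rw [← Finset.prod_pow]
    have : ∀ p ∈ s.primeFactors, (t p)^2 = ((p ^ s.factorization p : ℕ) : ℝ) := by
      intro p hp
      rw [ht, Real.sq_sqrt (by positivity)]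
      push_cast; ring
    rw [Finset.prod_congr rfl this, ← Nat.cast_prod]
    congr 1
    have := Nat.factorization_prod_pow_eq_self hs0
    rw [Nat.prod_factorization_eq_prod_primeFactors] at this
    exact this
  -- finish
  have hDk : (k:ℝ) ≤ ((Bfun s - beta s : ℕ) : ℝ) := by exact_mod_cast hk
  have hDnn : (0:ℝ) ≤ ((Bfun s - beta s : ℕ) : ℝ) := Nat.cast_nonneg _
  have hfin : ((k:ℝ))^2 ≤ 4 * (s:ℝ) := by
    have h1 : (2 * ((Bfun s - beta s : ℕ) : ℝ))^2 ≤ (4 * ∏ p ∈ s.primeFactors, t p)^2 := by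
      apply pow_le_pow_left₀ (by positivity) hsum
    rw [mul_pow, mul_pow, hprodsq] at h1
    nlinarith [hDk, hDnn]
  exact_mod_cast hfin

lemma sqfull_rep {s : ℕ} (hs : Squarefull s) :
    ∃ q : ℕ × ℕ, s = (q.2+1)^2 * (q.1+1)^3 := by
  have hs0 : s ≠ 0 := hs.1.ne'
  have he : ∀ p ∈ s.primeFactors, 2 ≤ s.factorization p := by
    intro p hp
    have hpp := Nat.prime_of_mem_primeFactors hp
    exact (Nat.Prime.pow_dvd_iff_le_factorization hpp hs0).1
      (hs.2 p hpp (Nat.dvd_of_mem_primeFactors hp))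
  set x : ℕ → ℕ := fun p => (s.factorization p - 3*(s.factorization p % 2))/2 with hx
  set y : ℕ → ℕ := fun p => s.factorization p % 2 with hy
  set a : ℕ := ∏ p ∈ s.primeFactors, p ^ x p with ha
  set b : ℕ := ∏ p ∈ s.primeFactors, p ^ y p with hb
  have hpos : ∀ p ∈ s.primeFactors, 0 < p := fun p hp =>
    (Nat.prime_of_mem_primeFactors hp).pos
  have hapos : 0 < a := Finset.prod_pos (fun p hp => Nat.pow_pos (hpos p hp))
  have hbpos : 0 < b := Finset.prod_pos (fun p hp => Nat.pow_pos (hpos p hp))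
  refine ⟨(b-1, a-1), ?_⟩
  simp only
  rw [show b - 1 + 1 = b from by omega, show a - 1 + 1 = a from by omega]
  have key : a^2 * b^3 = s := by
    rw [ha, hb, ← Finset.prod_pow, ← Finset.prod_pow, ← Finset.prod_mul_distrib]
    have : ∀ p ∈ s.primeFactors, (p ^ x p)^2 * (p ^ y p)^3 = p ^ s.factorization p := by
      intro p hp
      rw [← pow_mul, ← pow_mul, ← pow_add]
      congr 1
      have h2 := he p hp
      simp only [hx, hy]
      omega
    rw [Finset.prod_congr rfl this]
    have := Nat.factorization_prod_pow_eq_self hs0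
    rw [Nat.prod_factorization_eq_prod_primeFactors] at this
    exact this
  exact key.symm

lemma tele {h c : ℕ → ℝ} (h0 : ∀ n, 0 ≤ h n) (hc0 : ∀ n, 0 ≤ c n)
    (hle : ∀ n, h n ≤ c n - c (n+1)) : Summable h ∧ ∑' n, h n ≤ c 0 := by
  have key : ∀ n, ∑ i ∈ Finset.range n, h i ≤ c 0 := by
    intro n
    calc ∑ i ∈ Finset.range n, h i ≤ ∑ i ∈ Finset.range n, (c i - c (i+1)) :=
          Finset.sum_le_sum (fun i _ => hle i)
      _ = c 0 - c n := Finset.sum_range_sub' c n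
      _ ≤ c 0 := by linarith [hc0 n]
  exact ⟨summable_of_sum_range_le h0 key, Real.tsum_le_of_sum_range_le h0 key⟩

/-- inner tail sum of 1/(a+1)^2 -/
lemma inner_tail {A : ℝ} (hA : 0 < A) :
    Summable (fun a : ℕ => if A ≤ (a:ℝ)+1 then 1/((a:ℝ)+1)^2 else 0) ∧
    ∑' a : ℕ, (if A ≤ (a:ℝ)+1 then 1/((a:ℝ)+1)^2 else 0) ≤ 2/A := by
  set h : ℕ → ℝ := fun a => if A ≤ (a:ℝ)+1 then 1/((a:ℝ)+1)^2 else 0 with hh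
  set c : ℕ → ℝ := fun a => min (2/A) (2/((a:ℝ)+1)) with hc
  have h0 : ∀ n, 0 ≤ h n := by intro n; rw [hh]; dsimp only; positivity
  have hc0 : ∀ n, 0 ≤ c n := by
    intro n; rw [hc]; dsimp only
    apply le_min <;> positivity
  have hcmono : ∀ n, c (n+1) ≤ c n := by
    intro n; rw [hc]; dsimp only
    apply min_le_min (le_refl _)
    apply div_le_div_of_nonneg_left (by norm_num) (by positivity)
    push_cast; linarith
  have hle : ∀ n, h n ≤ c n - c (n+1) := by
    intro n
    rw [hh]; dsimp only
    split_ifs with hcond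
    · have hcn : c n = 2/((n:ℝ)+1) := by
        rw [hc]; dsimp only
        apply min_eq_right
        apply div_le_div_of_nonneg_left (by norm_num) hA hcond
      have hcn1 : c (n+1) ≤ 2/((n:ℝ)+2) := by
        rw [hc]; dsimp only
        refine (min_le_right _ _).trans (le_of_eq ?_)
        push_cast; ring
      rw [hcn]
      have hstep : 1/((n:ℝ)+1)^2 ≤ 2/((n:ℝ)+1) - 2/((n:ℝ)+2) := by
        rw [div_sub_div _ _ (by positivity : ((n:ℝ)+1) ≠ 0) (by positivity : ((n:ℝ)+2) ≠ 0)]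
        rw [div_le_div_iff₀ (by positivity) (by positivity)]
        ring_nf
        nlinarith [sq_nonneg ((n:ℝ)+1)]
      linarith [hcn1]
    · linarith [hcmono n]
  have := tele h0 hc0 hle
  constructor
  · exact this.1
  · refine this.2.trans ?_
    rw [hc]; dsimp only
    exact min_le_left _ _ |>.trans (by norm_num)

/-- outer sum: ∑ sqrt(b+1)/(b+1)^2 ≤ 4 -/
lemma outer_sum :
    Summable (fun b : ℕ => Real.sqrt ((b:ℝ)+1)/((b:ℝ)+1)^2) ∧
    ∑' b : ℕ, Real.sqrt ((b:ℝ)+1)/((b:ℝ)+1)^2 ≤ 4 := by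
  set w : ℕ → ℝ := fun b => Real.sqrt ((b:ℝ)+1)/((b:ℝ)+1)^2 with hw
  set c : ℕ → ℝ := fun b => 4/Real.sqrt ((b:ℝ)+1) with hc
  have h0 : ∀ n, 0 ≤ w n := by intro n; rw [hw]; positivity
  have hc0 : ∀ n, 0 ≤ c n := by intro n; rw [hc]; positivity
  have hle : ∀ n, w n ≤ c n - c (n+1) := by
    intro n
    set u : ℝ := Real.sqrt ((n:ℝ)+1) with hu
    set v : ℝ := Real.sqrt ((n:ℝ)+2) with hv
    have hu1 : 1 ≤ u := by
      rw [hu]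
      refine (Real.le_sqrt (by norm_num) (by positivity)).2 ?_
      have := Nat.cast_nonneg (α := ℝ) n
      nlinarith
    have hu0 : 0 < u := by linarith
    have huv : u ≤ v := Real.sqrt_le_sqrt (by push_cast; linarith)
    have hv0 : 0 < v := lt_of_lt_of_le hu0 huv
    have hu2 : u^2 = (n:ℝ)+1 := Real.sq_sqrt (by positivity)
    have hv2 : v^2 = (n:ℝ)+2 := Real.sq_sqrt (by positivity)
    have hcsub : c n - c (n+1) = 4*(v-u)/(u*v) := by
      rw [hc]; dsimp only
      push_cast
      rw [← hu, show Real.sqrt ((n:ℝ)+1+1) = v from by rw [hv]; congr 1; ring]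
      field_simp
    have hwn : w n = u/(u^2)^2 := by rw [hw, hu]; dsimp only; rw [hu2]
    rw [hcsub, hwn]
    rw [div_le_div_iff₀ (by positivity) (by positivity)]
    -- u/(u^2)^2 ≤ 4(v-u)/(uv)  ⟺  u*(u*v) ≤ 4(v-u)*(u^2)^2
    have hdiff : (v-u)*(v+u) = 1 := by nlinarith [hu2, hv2]
    have hv2' : v^2 = u^2 + 1 := by rw [hv2, hu2]; ring
    have huv2 : u*v ≤ u^2 + 1 := by nlinarith [sq_nonneg (u-v), hv2']
    have e1 : u^2*(u*v) ≤ u^2*(u^2+1) := mul_le_mul_of_nonneg_left huv2 (sq_nonneg u)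
    have hu21 : 1 ≤ u^2 := by nlinarith [hu1]
    have key : u^2*v*(u+v) ≤ 4*u^4 := by
      have e3 : u^2*v^2 = u^2*(u^2+1) := by rw [hv2']
      have e4 : 0 ≤ (u^2-1)*u^2 := mul_nonneg (by linarith) (sq_nonneg u)
      nlinarith [e1, e3, e4]
    have hfinal : u*(u*v)*(u+v) ≤ 4*(v-u)*(u^2)^2*(u+v) := by
      calc u*(u*v)*(u+v) = u^2*v*(u+v) := by ring
        _ ≤ 4*u^4 := key
        _ = 4*(u^2)^2*((v-u)*(v+u)) := by rw [hdiff]; ring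
        _ = 4*(v-u)*(u^2)^2*(u+v) := by ring
    exact le_of_mul_le_mul_right hfinal (by linarith : (0:ℝ) < u+v)
  have := tele h0 hc0 hle
  refine ⟨this.1, this.2.trans ?_⟩
  rw [hc]; dsimp only
  norm_num

set_option maxHeartbeats 1000000 in
theorem stmt12 : ∃ C : ℝ, ∀ k : ℕ, 1 ≤ k →
    ∑' s : {s : ℕ // Squarefull s ∧ k ≤ Bfun s - beta s}, (1 : ℝ) / (s : ℕ) ≤ C / k := by
  classical
  use 16
  intro k hk
  have hk0 : (0:ℝ) < k := by exact_mod_cast hk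
  -- the comparison function on pairs
  set g : ℕ × ℕ → ℝ := fun q =>
    if k^2 ≤ 4 * ((q.2+1)^2 * (q.1+1)^3) then
      (1:ℝ)/((((q.2+1)^2 * (q.1+1)^3 : ℕ)):ℝ) else 0 with hg
  have hgnn : ∀ q, 0 ≤ g q := by
    intro q; rw [hg]; dsimp only; split_ifs <;> positivity
  -- summable auxiliary
  have hsq : Summable (fun n : ℕ => 1/((n:ℝ)+1)^2) := by
    refine ((inner_tail one_pos).1).congr (fun a => ?_)
    rw [if_pos]
    have := Nat.cast_nonneg (α := ℝ) a
    linarith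
  have hG : Summable (fun q : ℕ × ℕ => (1/((q.1:ℝ)+1)^2) * (1/((q.2:ℝ)+1)^2)) :=
    Summable.mul_of_nonneg hsq hsq (fun n => by positivity) (fun n => by positivity)
  have hSg : Summable g := by
    apply Summable.of_nonneg_of_le hgnn _ hG
    intro q
    rw [hg]; dsimp only
    split_ifs with hcond
    · push_cast
      rw [div_mul_div_comm, one_mul]
      apply one_div_le_one_div_of_le (by positivity)
      have h1 : ((q.1:ℝ)+1)^2 ≤ ((q.1:ℝ)+1)^3 := by
        apply pow_le_pow_right₀ _ (by norm_num)
        have := Nat.cast_nonneg (α := ℝ) q.1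
        linarith
      have h2 : (0:ℝ) ≤ ((q.2:ℝ)+1)^2 := by positivity
      nlinarith [h1, h2]
    · positivity
  -- the injection
  set S := {s : ℕ // Squarefull s ∧ k ≤ Bfun s - beta s} with hS
  set i : S → ℕ × ℕ := fun s => (sqfull_rep s.2.1).choose with hi
  have hrep : ∀ s : S, (s:ℕ) = ((i s).2+1)^2 * ((i s).1+1)^3 := fun s =>
    (sqfull_rep s.2.1).choose_spec
  have hinj : Function.Injective i := by
    intro s1 s2 h12
    apply Subtype.ext
    rw [hrep s1, hrep s2, h12]
  have hfg : ∀ s : S, (1:ℝ)/((s:ℕ):ℝ) = g (i s) := by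
    intro s
    rw [hg]; dsimp only
    rw [if_pos]
    · congr 1
      exact_mod_cast congrArg (Nat.cast (R := ℝ)) (hrep s)
    · rw [← hrep s]
      exact keyA s.2.1 s.2.2
  have hSf : Summable (fun s : S => (1:ℝ)/((s:ℕ):ℝ)) := by
    refine (hSg.comp_injective hinj).congr (fun s => ?_)
    exact (hfg s).symm
  -- step 1 : compare with sum over pairs
  have step1 : ∑' s : S, (1:ℝ)/((s:ℕ):ℝ) ≤ ∑' q, g q := by
    apply Summable.tsum_le_tsum_of_inj i hinj (fun c _ => hgnn c)
      (fun s => le_of_eq (hfg s)) hSf hSg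
  -- step 2 : iterated sums
  have step2 : ∑' q, g q = ∑' b : ℕ, ∑' a : ℕ, g (b, a) := Summable.tsum_prod' hSg (fun b => hSg.prod_factor b)
  -- step 3 : inner bound
  have step3 : ∀ b : ℕ, ∑' a : ℕ, g (b, a) ≤
      (4/k) * (Real.sqrt ((b:ℝ)+1)/((b:ℝ)+1)^2) := by
    intro b
    set u : ℝ := (b:ℝ)+1 with hu
    have hu0 : (0:ℝ) < u := by rw [hu]; positivity
    set t : ℝ := Real.sqrt u with htd
    have ht0 : (0:ℝ) < t := Real.sqrt_pos.2 hu0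
    have ht2 : t^2 = u := Real.sq_sqrt hu0.le
    set A : ℝ := k/(2*u*t) with hA
    have hA0 : (0:ℝ) < A := by rw [hA]; positivity
    have hbound : ∀ a : ℕ, g (b, a) ≤
        (1/u^3) * (if A ≤ (a:ℝ)+1 then 1/((a:ℝ)+1)^2 else 0) := by
      intro a
      rw [hg]; dsimp only
      by_cases hcond : k^2 ≤ 4*((a+1)^2*(b+1)^3)
      · rw [if_pos hcond]
        -- outer condition true; show inner holds
        have hcast : (k:ℝ)^2 ≤ 4*(((a:ℝ)+1)^2 * u^3) := by
          rw [hu]; exact_mod_cast hcond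
        have hsq2 : (k:ℝ)^2 ≤ (2*(((a:ℝ)+1))*u*t)^2 := by
          have : (2*(((a:ℝ)+1))*u*t)^2 = 4*(((a:ℝ)+1)^2 * (u^2 * t^2)) := by ring
          rw [this, ht2]
          calc (k:ℝ)^2 ≤ 4*(((a:ℝ)+1)^2 * u^3) := hcast
            _ = 4*(((a:ℝ)+1)^2*(u^2*u)) := by ring
        have hklin : (k:ℝ) ≤ 2*((a:ℝ)+1)*u*t := by
          have h1 : (k:ℝ) = Real.sqrt ((k:ℝ)^2) := (Real.sqrt_sq (by positivity)).symm
          have h2 : Real.sqrt ((2*((a:ℝ)+1)*u*t)^2) = 2*((a:ℝ)+1)*u*t :=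
            Real.sqrt_sq (by positivity)
          rw [h1, ← h2]
          exact Real.sqrt_le_sqrt hsq2
        have hinner : A ≤ (a:ℝ)+1 := by
          rw [hA, div_le_iff₀ (by positivity)]
          calc (k:ℝ) ≤ 2*((a:ℝ)+1)*u*t := hklin
            _ = ((a:ℝ)+1)*(2*u*t) := by ring
        rw [if_pos hinner]
        apply le_of_eq
        push_cast
        rw [hu]
        rw [div_mul_div_comm, one_mul]
        congr 1
        ring
      · rw [if_neg hcond]
        have : (0:ℝ) ≤ (1/u^3) * (if A ≤ (a:ℝ)+1 then 1/((a:ℝ)+1)^2 else 0) := by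
          split_ifs <;> positivity
        linarith
    have hsummand : Summable (fun a : ℕ => g (b, a)) := hSg.prod_factor b
    have hsumh : Summable (fun a : ℕ =>
        (1/u^3) * (if A ≤ (a:ℝ)+1 then 1/((a:ℝ)+1)^2 else 0)) :=
      ((inner_tail hA0).1).mul_left _
    calc ∑' a : ℕ, g (b, a)
        ≤ ∑' a : ℕ, (1/u^3) * (if A ≤ (a:ℝ)+1 then 1/((a:ℝ)+1)^2 else 0) :=
          Summable.tsum_le_tsum hbound hsummand hsumh
      _ = (1/u^3) * ∑' a : ℕ, (if A ≤ (a:ℝ)+1 then 1/((a:ℝ)+1)^2 else 0) :=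
          tsum_mul_left
      _ ≤ (1/u^3) * (2/A) := by
          apply mul_le_mul_of_nonneg_left (inner_tail hA0).2 (by positivity)
      _ = (4/k) * (t/u^2) := by
          rw [hA]
          field_simp
          ring
      _ = (4/k) * (Real.sqrt ((b:ℝ)+1)/((b:ℝ)+1)^2) := by rw [htd, hu]
  -- step 4 : outer bound
  have houter : Summable (fun b : ℕ => ∑' a : ℕ, g (b, a)) :=
    ((summable_prod_of_nonneg hgnn).1 hSg).2
  have hws : Summable (fun b : ℕ =>
      (4/k) * (Real.sqrt ((b:ℝ)+1)/((b:ℝ)+1)^2)) := outer_sum.1.mul_left _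
  calc ∑' s : S, (1:ℝ)/((s:ℕ):ℝ) ≤ ∑' q, g q := step1
    _ = ∑' b : ℕ, ∑' a : ℕ, g (b, a) := step2
    _ ≤ ∑' b : ℕ, (4/k) * (Real.sqrt ((b:ℝ)+1)/((b:ℝ)+1)^2) :=
        Summable.tsum_le_tsum step3 houter hws
    _ = (4/k) * ∑' b : ℕ, Real.sqrt ((b:ℝ)+1)/((b:ℝ)+1)^2 := tsum_mul_left
    _ ≤ (4/k) * 4 := by
        apply mul_le_mul_of_nonneg_left outer_sum.2 (by positivity)
    _ = 16/k := by field_simp; ring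
end

section
/- For every k ≥ 1 and x ≥ 1, the number of integers n ≤ x with B(n) - β(n) ≥ k is at most C·x/k for an absolute constant C. -/
open Finset

lemma aux_sq_lt (m : ℕ) : (m+1)^2 + 1 ≤ 2^(m+2) := by
  induction m with
  | zero => norm_num
  | succ n ih =>
    have e1 : (2:ℕ)^(n+1+2) = 2*2^(n+2) := by ring
    rw [show n+1+1 = n+2 from rfl, e1]
    rcases Nat.eq_zero_or_pos n with rfl | hn
    · norm_num
    · have h2 : 1 ≤ n^2 := Nat.one_le_pow 2 n hn
      nlinarith [ih, h2]

-- per-prime: ((e-1)*p)^2 ≤ 4 * p^e for e ≥ 2, p ≥ 2, stated with e = m+2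
lemma aux_prime_pow (p m : ℕ) (hp : 2 ≤ p) : ((m+1)*p)^2 ≤ 4 * p^(m+2) := by
  have h1 : (m+1)^2 ≤ 2^(m+2) := le_trans (Nat.le_add_right _ 1) (aux_sq_lt m)
  have h2 : (2:ℕ)^m ≤ p^m := Nat.pow_le_pow_left hp m
  calc ((m+1)*p)^2 = (m+1)^2 * p^2 := by ring
    _ ≤ 2^(m+2) * p^2 := Nat.mul_le_mul_right _ h1
    _ = 4 * 2^m * p^2 := by ring
    _ ≤ 4 * p^m * p^2 := by
        have := Nat.mul_le_mul_left 4 h2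
        exact Nat.mul_le_mul_right _ this
    _ = 4 * p^(m+2) := by ring

lemma two_mul_le_nat (a b : ℕ) : 2*a*b ≤ a^2 + b^2 := by
  zify; nlinarith [sq_nonneg ((a:ℤ) - b)]

lemma key_prod (S : Finset ℕ) (d s : ℕ → ℕ) (hd : ∀ p ∈ S, 2 ≤ d p)
    (hs : ∀ p ∈ S, 4 ≤ s p) (h : ∀ p ∈ S, (d p)^2 ≤ 4 * s p) :
    (∑ p ∈ S, d p)^2 ≤ 4 * ∏ p ∈ S, s p := by
  induction S using Finset.cons_induction with
  | empty => simp
  | cons q S hq ih =>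
    rw [Finset.sum_cons, Finset.prod_cons]
    have hdq := h q (Finset.mem_cons_self q S)
    have hsq := hs q (Finset.mem_cons_self q S)
    rcases S.eq_empty_or_nonempty with rfl | hne
    · simpa using hdq
    · have hP : 4 ≤ ∏ p ∈ S, s p := by
        obtain ⟨r, hr⟩ := hne
        refine le_trans (hs r (Finset.mem_cons_of_mem hr)) ?_
        refine Finset.single_le_prod' (fun i hi => ?_) hr
        exact le_trans (by norm_num) (hs i (Finset.mem_cons_of_mem hi))
      have hD : (∑ p ∈ S, d p)^2 ≤ 4 * ∏ p ∈ S, s p :=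
        ih (fun p hp => hd p (Finset.mem_cons_of_mem hp))
          (fun p hp => hs p (Finset.mem_cons_of_mem hp))
          (fun p hp => h p (Finset.mem_cons_of_mem hp))
    -- goal: (d q + ∑ d)^2 ≤ 4 * (s q * ∏ s)
      set D := ∑ p ∈ S, d p
      set P := ∏ p ∈ S, s p
      have h2 : 2*(d q)*D ≤ (d q)^2 + D^2 := two_mul_le_nat _ _
      have h3 : 4*P ≤ (s q)*P := Nat.mul_le_mul_right _ hsq
      have h4 : 4*(s q) ≤ (s q)*P := by
        calc 4*(s q) = (s q)*4 := by ring
          _ ≤ (s q)*P := Nat.mul_le_mul_left _ hP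
      nlinarith [hdq, hD, h2, h3, h4]

lemma exists_ab (n k : ℕ) (hn : 1 ≤ n) (hk : k ≤ Bfun n - beta n) :
    ∃ a b : ℕ, 1 ≤ a ∧ 1 ≤ b ∧ a^2*b^3 ∣ n ∧ k^2 ≤ 4*(a^2*b^3) := by
  have hn0 : n ≠ 0 := by omega
  set e := n.factorization with he
  set S := n.primeFactors.filter (fun p => 2 ≤ e p) with hS
  have hprime : ∀ p ∈ S, p.Prime := fun p hp =>
    Nat.prime_of_mem_primeFactors (Finset.mem_filter.mp hp).1
  have h2e : ∀ p ∈ S, 2 ≤ e p := fun p hp => (Finset.mem_filter.mp hp).2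
  -- identity for Bfun - beta
  have hpos : ∀ p ∈ n.primeFactors, p ≤ e p * p := by
    intro p hp
    have h1 : 1 ≤ e p := (Nat.Prime.factorization_pos_of_dvd
      (Nat.prime_of_mem_primeFactors hp) hn0 (Nat.dvd_of_mem_primeFactors hp))
    calc p = 1 * p := (one_mul p).symm
      _ ≤ e p * p := Nat.mul_le_mul_right p h1
  have hD : Bfun n - beta n = ∑ p ∈ S, (e p - 1) * p := by
    rw [Bfun, beta, ← Finset.sum_tsub_distrib _ hpos]
    rw [hS, Finset.sum_filter_of_ne]
    · apply Finset.sum_congr rfl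
      intro p hp
      rw [Nat.sub_one_mul]
    · intro p hp hne
      by_contra hlt
      push_neg at hlt
      interval_cases h : e p <;> simp_all
  -- exponents
  set xf : ℕ → ℕ := fun p => if Even (e p) then e p / 2 else (e p - 3)/2 with hxf
  set yf : ℕ → ℕ := fun p => if Even (e p) then 0 else 1 with hyf
  have hexp : ∀ p ∈ S, xf p * 2 + yf p * 3 = e p := by
    intro p hp
    have h2 := h2e p hp
    rcases Nat.even_or_odd (e p) with hev | hod
    · have := Nat.even_iff.mp hev
      simp only [hxf, hyf, if_pos hev]
      omega
    · have := Nat.odd_iff.mp hod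
      have hnev : ¬ Even (e p) := Nat.not_even_iff_odd.mpr hod
      simp only [hxf, hyf, if_neg hnev]
      omega
  have hab : (∏ p ∈ S, p ^ xf p)^2 * (∏ p ∈ S, p ^ yf p)^3
      = ∏ p ∈ S, p ^ e p := by
    rw [← Finset.prod_pow, ← Finset.prod_pow, ← Finset.prod_mul_distrib]
    apply Finset.prod_congr rfl
    intro p hp
    rw [← pow_mul, ← pow_mul, ← pow_add, hexp p hp]
  refine ⟨∏ p ∈ S, p ^ xf p, ∏ p ∈ S, p ^ yf p, ?_, ?_, ?_, ?_⟩
  · exact Nat.one_le_iff_ne_zero.mpr (Finset.prod_ne_zero_iff.mpr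
      (fun p hp => pow_ne_zero _ (hprime p hp).pos.ne'))
  · exact Nat.one_le_iff_ne_zero.mpr (Finset.prod_ne_zero_iff.mpr
      (fun p hp => pow_ne_zero _ (hprime p hp).pos.ne'))
  · rw [hab]
    calc ∏ p ∈ S, p ^ e p ∣ ∏ p ∈ n.primeFactors, p ^ e p :=
          Finset.prod_dvd_prod_of_subset _ _ _ (Finset.filter_subset _ _)
      _ = n := Nat.factorization_prod_pow_eq_self hn0
  · rw [hab]
    have hkey : (∑ p ∈ S, (e p - 1) * p)^2 ≤ 4 * ∏ p ∈ S, p ^ e p := by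
      apply key_prod
      · intro p hp
        have := (hprime p hp).two_le
        have := h2e p hp
        calc 2 = 1 * 2 := rfl
          _ ≤ (e p - 1) * p := Nat.mul_le_mul (by omega) (by omega)
      · intro p hp
        calc 4 = 2^2 := rfl
          _ ≤ p^2 := Nat.pow_le_pow_left (hprime p hp).two_le 2
          _ ≤ p^(e p) := Nat.pow_le_pow_right (hprime p hp).pos (h2e p hp)
      · intro p hp
        obtain ⟨m, hm⟩ := Nat.exists_eq_add_of_le (h2e p hp)
        rw [hm, show 2 + m - 1 = m + 1 from by omega, show 2 + m = m + 2 from by omega]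
        exact aux_prime_pow p m (hprime p hp).two_le
    have hk2 : k ≤ ∑ p ∈ S, (e p - 1) * p := hD ▸ hk
    calc k^2 ≤ (∑ p ∈ S, (e p - 1) * p)^2 := Nat.pow_le_pow_left hk2 2
      _ ≤ 4 * ∏ p ∈ S, p ^ e p := hkey

lemma sum_inv_sq (m : ℕ) (hm : 1 ≤ m) :
    ∀ N : ℕ, ∑ a ∈ Icc m N, (1:ℝ)/(a:ℝ)^2 ≤ 2/m - 1/(max m N : ℕ) := by
  have hm0 : (0:ℝ) < m := by exact_mod_cast hm
  have hm1 : (1:ℝ) ≤ m := by exact_mod_cast hm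
  have e : (2:ℝ)/m - 1/m = 1/m := by ring
  have hinv : (0:ℝ) ≤ 1/m := by positivity
  intro N
  induction N with
  | zero =>
    have h1 : Finset.Icc m 0 = ∅ := by rw [Finset.Icc_eq_empty_iff]; omega
    have h2 : max m 0 = m := Nat.max_eq_left (Nat.zero_le m)
    rw [h1, h2, Finset.sum_empty]
    linarith [e, hinv]
  | succ N ih =>
    rcases Nat.lt_or_ge (N+1) m with h | h
    · have h1 : Finset.Icc m (N+1) = ∅ := by rw [Finset.Icc_eq_empty_iff]; omega
      have h2 : max m (N+1) = m := Nat.max_eq_left (by omega)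
      rw [h1, h2, Finset.sum_empty]
      linarith [e, hinv]
    · rw [Finset.sum_Icc_succ_top h]
      rcases Nat.lt_or_ge N m with h3 | h3
      · have hmN : m = N+1 := by omega
        have h1 : Finset.Icc m N = ∅ := by rw [Finset.Icc_eq_empty_iff]; omega
        have h2 : max m (N+1) = m := Nat.max_eq_left (by omega)
        rw [h1, h2, Finset.sum_empty, zero_add, ← hmN]
        have hsq : (1:ℝ)/(m:ℝ)^2 ≤ 1/m :=
          div_le_div_of_nonneg_left (by norm_num) (by positivity) (by nlinarith)
        linarith [e, hsq]
      · have h2 : max m N = N := Nat.max_eq_right h3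
        have h2' : max m (N+1) = N+1 := Nat.max_eq_right (by omega)
        rw [h2']
        rw [h2] at ih
        have hN0 : (0:ℝ) < N := by exact_mod_cast (by omega : 0 < N)
        have hN1 : (0:ℝ) < (N:ℝ)+1 := by linarith
        have e2 : (1:ℝ)/(N:ℝ) - 1/((N:ℝ)+1) = 1/((N:ℝ)*((N:ℝ)+1)) := by
          field_simp
          ring
        have step : (1:ℝ)/((N:ℝ)+1)^2 ≤ 1/(N:ℝ) - 1/((N:ℝ)+1) := by
          rw [e2]
          exact div_le_div_of_nonneg_left (by norm_num) (by positivity) (by nlinarith)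
        push_cast
        push_cast at ih step
        linarith [ih, step]

lemma filter_sum_sq (N : ℕ) (A : ℝ) (hA : 1 ≤ A) :
    ∑ a ∈ (Icc 1 N).filter (fun a : ℕ => A ≤ (a:ℝ)), (1:ℝ)/(a:ℝ)^2 ≤ 2/A := by
  have hA0 : (0:ℝ) < A := by linarith
  set m := ⌈A⌉₊ with hm
  have hm1 : 1 ≤ m := by
    rw [hm]; exact Nat.one_le_ceil_iff.mpr hA0
  have hAm : A ≤ (m:ℝ) := Nat.le_ceil A
  have hsub : (Icc 1 N).filter (fun a : ℕ => A ≤ (a:ℝ)) ⊆ Icc m N := by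
    intro a ha
    simp only [Finset.mem_filter, Finset.mem_Icc] at ha ⊢
    refine ⟨?_, ha.1.2⟩
    rw [hm]
    exact Nat.ceil_le.mpr ha.2
  calc ∑ a ∈ (Icc 1 N).filter (fun a : ℕ => A ≤ (a:ℝ)), (1:ℝ)/(a:ℝ)^2
      ≤ ∑ a ∈ Icc m N, (1:ℝ)/(a:ℝ)^2 :=
        Finset.sum_le_sum_of_subset_of_nonneg hsub (fun i _ _ => by positivity)
    _ ≤ 2/m - 1/(max m N : ℕ) := sum_inv_sq m hm1 N
    _ ≤ 2/m := by
        have : (0:ℝ) ≤ 1/(max m N : ℕ) := by positivity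
        linarith
    _ ≤ 2/A := div_le_div_of_nonneg_left (by norm_num) hA0 hAm

lemma sum_inv_bsqrt (N : ℕ) : ∑ b ∈ Icc 1 N, (1:ℝ)/((b:ℝ)*Real.sqrt b) ≤ 3 := by
  suffices h : ∀ M : ℕ, ∑ b ∈ Icc 1 M, (1:ℝ)/((b:ℝ)*Real.sqrt b)
      ≤ 3 - 2/Real.sqrt (max 1 M : ℕ) by
    have h2 : (0:ℝ) ≤ 2/Real.sqrt (max 1 N : ℕ) := by positivity
    linarith [h N]
  intro M
  induction M with
  | zero => simp; norm_num
  | succ M ih =>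
    rcases Nat.eq_zero_or_pos M with rfl | hM
    · norm_num
    · have h1 : (1:ℕ) ≤ M + 1 := by omega
      rw [Finset.sum_Icc_succ_top h1]
      have h2 : max 1 M = M := Nat.max_eq_right hM
      have h2' : max 1 (M+1) = M+1 := Nat.max_eq_right (by omega)
      rw [h2'] ; rw [h2] at ih
      have hM1 : (1:ℝ) ≤ M := by exact_mod_cast hM
      have hcast : ((M+1 : ℕ):ℝ) = (M:ℝ)+1 := by push_cast; ring
      rw [hcast]
      set u := Real.sqrt M with hu
      set v := Real.sqrt ((M:ℝ)+1) with hv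
      have hu1 : (1:ℝ) ≤ u := by
        rw [hu, show (1:ℝ) = Real.sqrt 1 from (Real.sqrt_one).symm]
        exact Real.sqrt_le_sqrt hM1
      have hv0 : (0:ℝ) < v := by
        rw [hv]; apply Real.sqrt_pos.mpr; linarith
      have hu0 : (0:ℝ) < u := by linarith
      have huv : u ≤ v := by
        rw [hu, hv]; apply Real.sqrt_le_sqrt; linarith
      have hu2 : u^2 = (M:ℝ) := Real.sq_sqrt (by linarith)
      have hv2 : v^2 = (M:ℝ)+1 := Real.sq_sqrt (by linarith)
      have hdiff : (v-u)*(v+u) = 1 := by nlinarith [hu2, hv2]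
      have ht : 0 ≤ v - u := by linarith
      have h3 : u*v*(u+v) ≤ 2*(v^2*v) := by nlinarith [huv, hu0, hv0]
      have h4 : (v-u)*(u*v*(u+v)) = u*v := by
        calc (v-u)*(u*v*(u+v)) = ((v-u)*(v+u))*(u*v) := by ring
          _ = 1*(u*v) := by rw [hdiff]
          _ = u*v := one_mul _
      have key : (1:ℝ)/(((M:ℝ)+1)*v) ≤ 2/u - 2/v := by
        have e1 : (2:ℝ)/u - 2/v = 2*(v-u)/(u*v) := by
          field_simp
        have hMv : ((M:ℝ)+1)*v = v^2*v := by rw [hv2]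
        rw [e1, hMv, div_le_div_iff₀ (by positivity) (by positivity)]
        have h5 := mul_le_mul_of_nonneg_left h3 ht
        nlinarith [h4, h5]
      linarith [ih, key]

lemma sum_P (N k : ℕ) (hk : 1 ≤ k) :
    ∑ ab ∈ ((Icc 1 N) ×ˢ (Icc 1 N)).filter
      (fun ab : ℕ × ℕ => k^2 ≤ 4*(ab.1^2*ab.2^3)),
      (1:ℝ)/((ab.1:ℝ)^2*(ab.2:ℝ)^3) ≤ 12/k := by
  have hk0 : (0:ℝ) < k := by exact_mod_cast hk
  have per_b : ∀ b ∈ Icc 1 N,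
      ∑ a ∈ (Icc 1 N).filter (fun a : ℕ => k^2 ≤ 4*(a^2*b^3)),
        (1:ℝ)/((a:ℝ)^2*(b:ℝ)^3) ≤ (4/k) * (1/((b:ℝ)*Real.sqrt b)) := by
    intro b hb
    have hb1 : 1 ≤ b := (Finset.mem_Icc.mp hb).1
    have hbR : (1:ℝ) ≤ (b:ℝ) := by exact_mod_cast hb1
    have hb0 : (0:ℝ) < (b:ℝ) := by linarith
    have hsb : Real.sqrt b * Real.sqrt b = (b:ℝ) := Real.mul_self_sqrt hb0.le
    have hsb0 : (0:ℝ) < Real.sqrt b := Real.sqrt_pos.mpr hb0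
    have hsb1 : (1:ℝ) ≤ Real.sqrt b := by
      rw [show (1:ℝ) = Real.sqrt 1 from Real.sqrt_one.symm]
      exact Real.sqrt_le_sqrt hbR
    set A := max 1 ((k:ℝ)/(2*(b:ℝ)*Real.sqrt b)) with hA
    have hA1 : (1:ℝ) ≤ A := le_max_left _ _
    have hA0 : (0:ℝ) < A := by linarith
    have hAge : (k:ℝ)/(2*(b:ℝ)*Real.sqrt b) ≤ A := le_max_right _ _
    have hsub : (Icc 1 N).filter (fun a : ℕ => k^2 ≤ 4*(a^2*b^3))
        ⊆ (Icc 1 N).filter (fun a : ℕ => A ≤ (a:ℝ)) := by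
      intro a ha
      simp only [Finset.mem_filter, Finset.mem_Icc] at ha ⊢
      refine ⟨ha.1, ?_⟩
      have ha1 : 1 ≤ a := ha.1.1
      have haR : (1:ℝ) ≤ (a:ℝ) := by exact_mod_cast ha1
      have hineq : (k:ℝ)^2 ≤ 4*((a:ℝ)^2*(b:ℝ)^3) := by exact_mod_cast ha.2
      have hsq : (k:ℝ)^2 ≤ (2*(a:ℝ)*((b:ℝ)*Real.sqrt b))^2 := by
        have : (2*(a:ℝ)*((b:ℝ)*Real.sqrt b))^2 = 4*((a:ℝ)^2*((b:ℝ)^2*(b:ℝ))) := by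
          rw [mul_pow, mul_pow, mul_pow, sq (Real.sqrt b), hsb]; ring
        rw [this]
        calc (k:ℝ)^2 ≤ 4*((a:ℝ)^2*(b:ℝ)^3) := hineq
          _ = 4*((a:ℝ)^2*((b:ℝ)^2*(b:ℝ))) := by ring
      have hkle : (k:ℝ) ≤ 2*(a:ℝ)*((b:ℝ)*Real.sqrt b) := by
        have h1 := Real.sqrt_le_sqrt hsq
        rwa [Real.sqrt_sq hk0.le, Real.sqrt_sq (by positivity)] at h1
      rw [hA]
      apply max_le haR
      rw [div_le_iff₀ (by positivity)]
      calc (k:ℝ) ≤ 2*(a:ℝ)*((b:ℝ)*Real.sqrt b) := hkle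
        _ = (a:ℝ)*(2*(b:ℝ)*Real.sqrt b) := by ring
    calc ∑ a ∈ (Icc 1 N).filter (fun a : ℕ => k^2 ≤ 4*(a^2*b^3)),
          (1:ℝ)/((a:ℝ)^2*(b:ℝ)^3)
        ≤ ∑ a ∈ (Icc 1 N).filter (fun a : ℕ => A ≤ (a:ℝ)),
          (1:ℝ)/((a:ℝ)^2*(b:ℝ)^3) :=
          Finset.sum_le_sum_of_subset_of_nonneg hsub (fun i _ _ => by positivity)
      _ = (1/(b:ℝ)^3) * ∑ a ∈ (Icc 1 N).filter (fun a : ℕ => A ≤ (a:ℝ)),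
          (1:ℝ)/(a:ℝ)^2 := by
          rw [Finset.mul_sum]
          apply Finset.sum_congr rfl
          intro a _
          ring
      _ ≤ (1/(b:ℝ)^3) * (2/A) := by
          apply mul_le_mul_of_nonneg_left (filter_sum_sq N A hA1) (by positivity)
      _ ≤ (1/(b:ℝ)^3) * (2*(2*(b:ℝ)*Real.sqrt b)/k) := by
          apply mul_le_mul_of_nonneg_left ?_ (by positivity)
          have hq : (0:ℝ) < (k:ℝ)/(2*(b:ℝ)*Real.sqrt b) := by positivity
          calc (2:ℝ)/A ≤ 2/((k:ℝ)/(2*(b:ℝ)*Real.sqrt b)) :=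
                div_le_div_of_nonneg_left (by norm_num) hq hAge
            _ = 2*(2*(b:ℝ)*Real.sqrt b)/k := by
                rw [div_div_eq_mul_div]
      _ = (4/k) * (1/((b:ℝ)*Real.sqrt b)) := by
          have hu : Real.sqrt (b:ℝ) ≠ 0 := ne_of_gt hsb0
          have hkne : (k:ℝ) ≠ 0 := ne_of_gt hk0
          field_simp
          linear_combination 4 * hsb
  calc ∑ ab ∈ ((Icc 1 N) ×ˢ (Icc 1 N)).filter
        (fun ab : ℕ × ℕ => k^2 ≤ 4*(ab.1^2*ab.2^3)),
        (1:ℝ)/((ab.1:ℝ)^2*(ab.2:ℝ)^3)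
      = ∑ b ∈ Icc 1 N, ∑ a ∈ (Icc 1 N).filter (fun a : ℕ => k^2 ≤ 4*(a^2*b^3)),
        (1:ℝ)/((a:ℝ)^2*(b:ℝ)^3) := by
        rw [Finset.sum_filter, Finset.sum_product_right]
        apply Finset.sum_congr rfl
        intro b _
        rw [Finset.sum_filter]
    _ ≤ ∑ b ∈ Icc 1 N, (4/k) * (1/((b:ℝ)*Real.sqrt b)) :=
        Finset.sum_le_sum per_b
    _ = (4/k) * ∑ b ∈ Icc 1 N, (1:ℝ)/((b:ℝ)*Real.sqrt b) := by
        rw [Finset.mul_sum]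
    _ ≤ (4/k) * 3 := by
        apply mul_le_mul_of_nonneg_left (sum_inv_bsqrt N) (by positivity)
    _ = 12/k := by ring

lemma count_dvd (N m : ℕ) : ((Icc 1 N).filter (fun n => m ∣ n)).card = N / m := by
  have h : Finset.Icc 1 N = Finset.Ioc 0 N := by
    rw [← Finset.Icc_add_one_left_eq_Ioc]; rfl
  rw [h]
  exact Nat.Ioc_filter_dvd_card_eq_div N m

theorem stmt13 : ∃ C : ℝ, ∀ k : ℕ, 1 ≤ k → ∀ x : ℝ, 1 ≤ x →
    (((Finset.Icc 1 ⌊x⌋₊).filter fun n => k ≤ Bfun n - beta n).card : ℝ) ≤ C * x / k := by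
  use 12
  intro k hk x hx
  have hk0 : (0:ℝ) < k := by exact_mod_cast hk
  have hx0 : (0:ℝ) ≤ x := by linarith
  set N := ⌊x⌋₊ with hN
  have hNx : (N:ℝ) ≤ x := Nat.floor_le hx0
  set P := ((Icc 1 N) ×ˢ (Icc 1 N)).filter
    (fun ab : ℕ × ℕ => k^2 ≤ 4*(ab.1^2*ab.2^3)) with hP
  have cover : (Icc 1 N).filter (fun n => k ≤ Bfun n - beta n) ⊆
      P.biUnion (fun ab => (Icc 1 N).filter (fun n => ab.1^2*ab.2^3 ∣ n)) := by
    intro n hn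
    simp only [Finset.mem_filter, Finset.mem_Icc] at hn
    obtain ⟨⟨hn1, hnN⟩, hnk⟩ := hn
    obtain ⟨a, b, ha1, hb1, hdvd, hsz⟩ := exists_ab n k hn1 hnk
    have hb3 : 1 ≤ b^3 := Nat.one_le_pow _ _ hb1
    have ha2 : 1 ≤ a^2 := Nat.one_le_pow _ _ ha1
    have hmn : a^2*b^3 ≤ n := Nat.le_of_dvd (by omega) hdvd
    have haN : a ≤ N := by
      have h1 : a ≤ a^2 := Nat.le_self_pow (by norm_num) a
      have h2 : a^2 ≤ a^2*b^3 := Nat.le_mul_of_pos_right _ (by omega)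
      omega
    have hbN : b ≤ N := by
      have h1 : b ≤ b^3 := Nat.le_self_pow (by norm_num) b
      have h2 : b^3 ≤ a^2*b^3 := Nat.le_mul_of_pos_left _ (by omega)
      omega
    rw [Finset.mem_biUnion]
    refine ⟨(a, b), ?_, ?_⟩
    · rw [hP, Finset.mem_filter, Finset.mem_product]
      exact ⟨⟨Finset.mem_Icc.mpr ⟨ha1, haN⟩, Finset.mem_Icc.mpr ⟨hb1, hbN⟩⟩, hsz⟩
    · exact Finset.mem_filter.mpr ⟨Finset.mem_Icc.mpr ⟨hn1, hnN⟩, hdvd⟩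
  have hcard : ((Icc 1 N).filter (fun n => k ≤ Bfun n - beta n)).card
      ≤ ∑ ab ∈ P, N / (ab.1^2*ab.2^3) :=
    le_trans (Finset.card_le_card cover)
      (le_trans Finset.card_biUnion_le
        (Finset.sum_le_sum fun ab _ => le_of_eq (count_dvd N _)))
  have hreal : (((Icc 1 N).filter (fun n => k ≤ Bfun n - beta n)).card : ℝ)
      ≤ ∑ ab ∈ P, (N:ℝ) / ((ab.1:ℝ)^2*(ab.2:ℝ)^3) := by
    calc (((Icc 1 N).filter (fun n => k ≤ Bfun n - beta n)).card : ℝ)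
        ≤ ((∑ ab ∈ P, N / (ab.1^2*ab.2^3) : ℕ) : ℝ) := by exact_mod_cast hcard
      _ = ∑ ab ∈ P, ((N / (ab.1^2*ab.2^3) : ℕ) : ℝ) := by rw [Nat.cast_sum]
      _ ≤ ∑ ab ∈ P, (N:ℝ) / ((ab.1:ℝ)^2*(ab.2:ℝ)^3) := by
          apply Finset.sum_le_sum
          intro ab _
          calc ((N / (ab.1^2*ab.2^3) : ℕ) : ℝ) ≤ (N:ℝ) / ((ab.1^2*ab.2^3 : ℕ):ℝ) :=
                Nat.cast_div_le
            _ = (N:ℝ) / ((ab.1:ℝ)^2*(ab.2:ℝ)^3) := by push_cast; ring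
  have hstep : ∀ ab ∈ P, (N:ℝ) / ((ab.1:ℝ)^2*(ab.2:ℝ)^3)
      ≤ x * (1/((ab.1:ℝ)^2*(ab.2:ℝ)^3)) := by
    intro ab hab
    rw [hP, Finset.mem_filter, Finset.mem_product] at hab
    have ha1 : 1 ≤ ab.1 := (Finset.mem_Icc.mp hab.1.1).1
    have hb1 : 1 ≤ ab.2 := (Finset.mem_Icc.mp hab.1.2).1
    have hpos : (0:ℝ) < (ab.1:ℝ)^2*(ab.2:ℝ)^3 := by
      have h1 : (0:ℝ) < (ab.1:ℝ) := by exact_mod_cast ha1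
      have h2 : (0:ℝ) < (ab.2:ℝ) := by exact_mod_cast hb1
      positivity
    rw [mul_one_div]
    exact div_le_div_of_nonneg_right hNx hpos.le
  calc (((Icc 1 N).filter (fun n => k ≤ Bfun n - beta n)).card : ℝ)
      ≤ ∑ ab ∈ P, (N:ℝ) / ((ab.1:ℝ)^2*(ab.2:ℝ)^3) := hreal
    _ ≤ ∑ ab ∈ P, x * (1/((ab.1:ℝ)^2*(ab.2:ℝ)^3)) := Finset.sum_le_sum hstep
    _ = x * ∑ ab ∈ P, (1:ℝ)/((ab.1:ℝ)^2*(ab.2:ℝ)^3) := by rw [Finset.mul_sum]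
    _ ≤ x * (12/k) := mul_le_mul_of_nonneg_left (sum_P N k hk) hx0
    _ = 12 * x / k := by ring
end
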